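/- arXiv:1510.03986 — 8 statements merged into one kernel-verified Lean document; each statement's English description precedes it below -/
import Mathlib

section
/- T is injective on W̃: every x ∈ W̃ with T x = 0 satisfies x = 0. (Abstract form of Lemma 3.2(1) of the paper: for a compressable operator 𝒟, the restriction of ∂*_ρ∘𝒟 to sections of im(∂*_ρ) is injective; here the compressability hypothesis enters only through the stated filtration and eigenvalue conditions on T.) -/
open Polynomial

lemma aeval_apply_of_ker {W : Type*} [AddCommGroup W] [Module ℝ W]
    (T : Module.End ℝ W) (x : W) (hx : T x = 0) (p : ℝ[X]) :
    (aeval T p) x = p.coeff 0 • x := by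
  have hpow : ∀ n : ℕ, n ≠ 0 → (T ^ n) x = 0 := by
    intro n hn
    obtain ⟨m, rfl⟩ := Nat.exists_eq_succ_of_ne_zero hn
    rw [pow_succ, Module.End.mul_apply, hx, map_zero]
  rw [aeval_endomorphism, Polynomial.sum]
  rw [Finset.sum_eq_single 0]
  · simp
  · intro n _ hn
    rw [hpow n hn, smul_zero]
  · intro h
    simp [Polynomial.notMem_support_iff.mp h]

/-- Abstract form of Lemma 3.2(1): for a compressable operator `𝒟`, the restriction of
`∂*_ρ ∘ 𝒟` (here `T`) to (sections of) `im ∂*_ρ` (here `W̃ = Wtil`) is injective. -/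
theorem compressable_injective_on_image {W : Type*} [AddCommGroup W] [Module ℝ W]
    (Wtil Wbar : Submodule ℝ W) (hWW : Wtil ≤ Wbar)
    (T : Module.End ℝ W) (hrange : LinearMap.range T ≤ Wtil)
    (N : ℕ) (F : ℕ → Submodule ℝ W)
    (hF0 : F 0 = Wtil) (hFN : F N = ⊥)
    (hdec : ∀ ℓ : ℕ, F (ℓ + 1) ≤ F ℓ)
    (hTF : ∀ ℓ : ℕ, ∀ x ∈ F ℓ, T x ∈ F ℓ)
    (j : ℕ → ℕ) (a : (ℓ : ℕ) → Fin (j ℓ) → ℝ)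
    (ha0 : ∀ ℓ < N, ∀ r, a ℓ r ≠ 0)
    (hainj : ∀ ℓ < N, Function.Injective (a ℓ))
    (hdiag : ∀ ℓ < N, ∀ x ∈ F ℓ,
      (aeval T (∏ r : Fin (j ℓ), (X - C (a ℓ r)))) x ∈ F (ℓ + 1)) :
    ∀ x ∈ Wtil, T x = 0 → x = 0 := by
  suffices h : ∀ d ℓ : ℕ, ℓ + d = N → ∀ x ∈ F ℓ, T x = 0 → x = 0 by
    intro x hx hTx
    exact h N 0 (by omega) x (hF0 ▸ hx) hTx
  intro d
  induction d with
  | zero =>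
    intro ℓ hℓ x hx _
    have : x ∈ F N := by rwa [show N = ℓ by omega]
    rw [hFN] at this
    simpa using this
  | succ d ih =>
    intro ℓ hℓ x hx hTx
    have hℓN : ℓ < N := by omega
    have hmem := hdiag ℓ hℓN x hx
    rw [aeval_apply_of_ker T x hTx] at hmem
    set p : ℝ[X] := ∏ r : Fin (j ℓ), (X - C (a ℓ r)) with hp
    have hc : p.coeff 0 ≠ 0 := by
      have : p.coeff 0 = p.eval 0 := by simp [Polynomial.coeff_zero_eq_eval_zero]
      rw [this, hp, Polynomial.eval_prod]
      simp only [Polynomial.eval_sub, Polynomial.eval_X, Polynomial.eval_C, zero_sub]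
      exact Finset.prod_ne_zero_iff.mpr fun r _ => neg_ne_zero.mpr (ha0 ℓ hℓN r)
    have hx' : x ∈ F (ℓ + 1) := by
      have := (F (ℓ + 1)).smul_mem (p.coeff 0)⁻¹ hmem
      rwa [inv_smul_smul₀ hc] at this
    exact ih (ℓ + 1) (by omega) x hx' hTx
end

section
/- For each ℓ < N define the ℝ-linear map S_ℓ := ((−1)^{j_ℓ}/∏_{r=1}^{j_ℓ} a^ℓ_r) · ∏_{r=1}^{j_ℓ}(T − a^ℓ_r·id) : W → W (so S_ℓ = id when j_ℓ = 0). Then: (i) S_ℓ x − x ∈ W̃ for every x ∈ W; (ii) T ∘ S_ℓ = S_ℓ ∘ T; (iii) S_ℓ maps F m into F m for every m; and (iv) S_ℓ maps F ℓ into F (ℓ+1). (Abstract form of Lemma 3.3 of the paper.) -/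
open Polynomial

/-- The operator `S_ℓ = ((−1)^{j_ℓ} / ∏_r a^ℓ_r) · ∏_r (T − a^ℓ_r · id)`. -/
noncomputable def Sl {W : Type*} [AddCommGroup W] [Module ℝ W]
    (T : Module.End ℝ W) {n : ℕ} (a : Fin n → ℝ) : Module.End ℝ W :=
  ((-1 : ℝ) ^ n / ∏ r, a r) • aeval T (∏ r, (X - C (a r)))

/-- Abstract form of Lemma 3.3: the basic properties of the operators `S_ℓ`. -/
theorem Sl_properties {W : Type*} [AddCommGroup W] [Module ℝ W]
    (Wtil Wbar : Submodule ℝ W) (hWW : Wtil ≤ Wbar)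
    (T : Module.End ℝ W) (hrange : LinearMap.range T ≤ Wtil)
    (N : ℕ) (F : ℕ → Submodule ℝ W)
    (hF0 : F 0 = Wtil) (hFN : F N = ⊥)
    (hdec : ∀ ℓ : ℕ, F (ℓ + 1) ≤ F ℓ)
    (hTF : ∀ ℓ : ℕ, ∀ x ∈ F ℓ, T x ∈ F ℓ)
    (j : ℕ → ℕ) (a : (ℓ : ℕ) → Fin (j ℓ) → ℝ)
    (ha0 : ∀ ℓ < N, ∀ r, a ℓ r ≠ 0)
    (hainj : ∀ ℓ < N, Function.Injective (a ℓ))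
    (hdiag : ∀ ℓ < N, ∀ x ∈ F ℓ,
      (aeval T (∏ r : Fin (j ℓ), (X - C (a ℓ r)))) x ∈ F (ℓ + 1))
    (ℓ : ℕ) (hℓ : ℓ < N) :
    (∀ x : W, Sl T (a ℓ) x - x ∈ Wtil) ∧
    (T ∘ₗ Sl T (a ℓ) = Sl T (a ℓ) ∘ₗ T) ∧
    (∀ m : ℕ, ∀ x ∈ F m, Sl T (a ℓ) x ∈ F m) ∧
    (∀ x ∈ F ℓ, Sl T (a ℓ) x ∈ F (ℓ + 1)) := by
  classical
  set p : ℝ[X] := ∏ r : Fin (j ℓ), (X - C (a ℓ r)) with hp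
  set c : ℝ := (-1 : ℝ) ^ (j ℓ) / ∏ r, a ℓ r with hcdef
  have hprod : (∏ r, a ℓ r) ≠ 0 :=
    Finset.prod_ne_zero_iff.mpr (fun r _ => ha0 ℓ hℓ r)
  have h0 : p.coeff 0 = (-1 : ℝ) ^ (j ℓ) * ∏ r, a ℓ r := by
    rw [hp, Polynomial.coeff_zero_eq_eval_zero]
    simp only [Polynomial.eval_prod, Polynomial.eval_sub, Polynomial.eval_X,
      Polynomial.eval_C, zero_sub]
    calc (∏ r, -(a ℓ r)) = ∏ r, ((-1 : ℝ) * a ℓ r) := by simp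
    _ = (∏ _r : Fin (j ℓ), (-1 : ℝ)) * ∏ r, a ℓ r := Finset.prod_mul_distrib
    _ = (-1 : ℝ) ^ (j ℓ) * ∏ r, a ℓ r := by
        simp [Finset.prod_const]
  have hc : c * p.coeff 0 = 1 := by
    rw [h0, hcdef]
    field_simp
    rw [← pow_mul, mul_comm, pow_mul]
    simp
  have hdecomp : aeval T p = T * aeval T p.divX + algebraMap ℝ (Module.End ℝ W) (p.coeff 0) := by
    nth_rewrite 1 [← Polynomial.X_mul_divX_add p]
    rw [map_add, map_mul, Polynomial.aeval_X, Polynomial.aeval_C]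
  -- polynomial stability
  have hpow : ∀ m k (x : W), x ∈ F m → (T ^ k) x ∈ F m := by
    intro m k x hx
    induction k with
    | zero => simpa using hx
    | succ k ih => rw [pow_succ', Module.End.mul_apply]; exact hTF m _ ih
  have hstab : ∀ (q : ℝ[X]) m (x : W), x ∈ F m → aeval T q x ∈ F m := by
    intro q
    induction q using Polynomial.induction_on' with
    | add q r hq hr =>
      intro m x hx
      simp only [map_add, LinearMap.add_apply]
      exact (F m).add_mem (hq m x hx) (hr m x hx)
    | monomial k r =>
      intro m x hx
      rw [Polynomial.aeval_monomial, Module.End.mul_apply, Module.algebraMap_end_apply]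
      exact (F m).smul_mem _ (hpow m k x hx)
  refine ⟨?_, ?_, ?_, ?_⟩
  · intro x
    have hx : Sl T (a ℓ) x - x = T (c • aeval T p.divX x) := by
      simp only [Sl, ← hcdef, ← hp, hdecomp, LinearMap.smul_apply, LinearMap.add_apply,
        Module.End.mul_apply, Module.algebraMap_end_apply, smul_add, smul_smul, hc, one_smul,
        map_smul]
      abel
    rw [hx]
    exact hrange ⟨_, rfl⟩
  · have hcomm : T * aeval T p = aeval T p * T := by
      calc T * aeval T p = aeval T (X * p) := by simp [map_mul]
      _ = aeval T (p * X) := by rw [mul_comm]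
      _ = aeval T p * T := by simp [map_mul]
    simp only [Sl, ← hcdef, ← hp]
    ext x
    simp only [LinearMap.comp_apply, LinearMap.smul_apply, map_smul]
    have := congrArg (fun f : Module.End ℝ W => f x) hcomm
    simp only [Module.End.mul_apply] at this
    rw [this]
  · intro m x hx
    simp only [Sl, ← hcdef, ← hp, LinearMap.smul_apply]
    exact (F m).smul_mem _ (hstab p m x hx)
  · intro x hx
    simp only [Sl, ← hcdef, ← hp, LinearMap.smul_apply]
    exact (F (ℓ + 1)).smul_mem _ (hdiag ℓ hℓ x hx)
end

section
/- Define S := S_{N−1} ∘ ⋯ ∘ S_1 ∘ S_0 : W → W, where S_ℓ := ((−1)^{j_ℓ}/∏_{r=1}^{j_ℓ} a^ℓ_r) · ∏_{r=1}^{j_ℓ}(T − a^ℓ_r·id). Then S is given by a polynomial in T (there exists a polynomial p ∈ ℝ[X] with S equal to the evaluation of p at T), and S satisfies: (i) S x − x ∈ W̃ for every x ∈ W; (ii) S x = 0 for every x ∈ W̃; and (iii) T(S x) = 0 for every x ∈ W. (Abstract form of the existence part of Theorem 3.3 of the paper: the splitting operator is a universal polynomial in ∂*_ρ∘𝒟.)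 -/
open Polynomial

/-- The composite `S_{n−1} ∘ ⋯ ∘ S_1 ∘ S_0`. -/
noncomputable def Scomp {W : Type*} [AddCommGroup W] [Module ℝ W]
    (T : Module.End ℝ W) (j : ℕ → ℕ) (a : (ℓ : ℕ) → Fin (j ℓ) → ℝ) :
    ℕ → Module.End ℝ W
  | 0 => LinearMap.id
  | n + 1 => Sl T (a n) ∘ₗ Scomp T j a n

lemma Sl_eq_aeval {W : Type*} [AddCommGroup W] [Module ℝ W] (T : Module.End ℝ W) {n : ℕ}
    (a : Fin n → ℝ) :
    Sl T a = aeval T (C ((-1 : ℝ) ^ n / ∏ r, a r) * ∏ r, (X - C (a r))) := by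
  rw [Sl, Algebra.smul_def, map_mul, aeval_C]

lemma coeff_zero_one {n : ℕ} (a : Fin n → ℝ) (ha : ∀ r, a r ≠ 0) :
    (C ((-1 : ℝ) ^ n / ∏ r, a r) * ∏ r, (X - C (a r))).coeff 0 = 1 := by
  have hP : (∏ r, (X - C (a r)) : Polynomial ℝ).coeff 0 = (-1 : ℝ) ^ n * ∏ r, a r := by
    rw [coeff_zero_eq_eval_zero, eval_prod]
    simp only [eval_sub, eval_X, eval_C, zero_sub]
    calc (∏ r, -(a r)) = ∏ r, ((-1 : ℝ) * a r) := by simp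
    _ = (-1 : ℝ) ^ n * ∏ r, a r := by
        rw [Finset.prod_mul_distrib, Finset.prod_const, Finset.card_univ, Fintype.card_fin]
  rw [mul_coeff_zero, coeff_C_zero, hP]
  have h0 : (∏ r, a r) ≠ 0 := Finset.prod_ne_zero_iff.mpr fun r _ => ha r
  have h1 : ((-1 : ℝ) ^ n) * ((-1 : ℝ) ^ n) = 1 := by
    rw [← pow_add]
    exact Even.neg_one_pow ⟨n, rfl⟩
  field_simp
  linear_combination h1

lemma aeval_sub_self_mem {W : Type*} [AddCommGroup W] [Module ℝ W] (T : Module.End ℝ W)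
    (q : Polynomial ℝ) (hq : q.coeff 0 = 1) (x : W) :
    aeval T q x - x ∈ LinearMap.range T := by
  obtain ⟨r, hr⟩ : (X : Polynomial ℝ) ∣ (q - C 1) := by
    rw [X_dvd_iff]
    simp [hq]
  have hq' : q = C 1 + X * r := by rw [← hr]; ring
  refine ⟨aeval T r x, ?_⟩
  rw [hq', map_add, map_mul, aeval_X, aeval_C]
  simp [Module.End.mul_apply]

/-- Abstract form of the existence part of Theorem 3.3: the splitting operator
`S = S_{N−1} ∘ ⋯ ∘ S_0` is a (universal) polynomial in `T = ∂*_ρ ∘ 𝒟` and satisfies the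
basic properties of a splitting operator. -/
theorem splitting_operator_exists {W : Type*} [AddCommGroup W] [Module ℝ W]
    (Wtil Wbar : Submodule ℝ W) (hWW : Wtil ≤ Wbar)
    (T : Module.End ℝ W) (hrange : LinearMap.range T ≤ Wtil)
    (N : ℕ) (F : ℕ → Submodule ℝ W)
    (hF0 : F 0 = Wtil) (hFN : F N = ⊥)
    (hdec : ∀ ℓ : ℕ, F (ℓ + 1) ≤ F ℓ)
    (hTF : ∀ ℓ : ℕ, ∀ x ∈ F ℓ, T x ∈ F ℓ)
    (j : ℕ → ℕ) (a : (ℓ : ℕ) → Fin (j ℓ) → ℝ)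
    (ha0 : ∀ ℓ < N, ∀ r, a ℓ r ≠ 0)
    (hainj : ∀ ℓ < N, Function.Injective (a ℓ))
    (hdiag : ∀ ℓ < N, ∀ x ∈ F ℓ,
      (aeval T (∏ r : Fin (j ℓ), (X - C (a ℓ r)))) x ∈ F (ℓ + 1)) :
    (∃ p : Polynomial ℝ, Scomp T j a N = aeval T p) ∧
    (∀ x : W, Scomp T j a N x - x ∈ Wtil) ∧
    (∀ x ∈ Wtil, Scomp T j a N x = 0) ∧
    (∀ x : W, T (Scomp T j a N x) = 0) := by
  -- polynomial representation
  have hpoly : ∀ n : ℕ, ∃ p : Polynomial ℝ, Scomp T j a n = aeval T p := by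
    intro n
    induction n with
    | zero => exact ⟨1, by simp [Scomp]; rfl⟩
    | succ n ih =>
      obtain ⟨p, hp⟩ := ih
      refine ⟨(C ((-1 : ℝ) ^ (j n) / ∏ r, a n r) * ∏ r, (X - C (a n r))) * p, ?_⟩
      rw [map_mul, ← Sl_eq_aeval, ← hp]
      rfl
  -- property (i)
  have hi : ∀ n ≤ N, ∀ x : W, Scomp T j a n x - x ∈ Wtil := by
    intro n hn
    induction n with
    | zero => intro x; simp [Scomp]
    | succ n ih =>
      intro x
      have hn' : n ≤ N := Nat.le_of_succ_le hn
      have h1 : Sl T (a n) (Scomp T j a n x) - Scomp T j a n x ∈ Wtil := by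
        apply hrange
        rw [Sl_eq_aeval]
        exact aeval_sub_self_mem T _ (coeff_zero_one (a n) (ha0 n hn)) _
      have h2 := ih hn' x
      have : Scomp T j a (n+1) x - x
          = (Sl T (a n) (Scomp T j a n x) - Scomp T j a n x) + (Scomp T j a n x - x) := by
        simp [Scomp]
      rw [this]
      exact Wtil.add_mem h1 h2
  -- membership in filtration
  have hmem : ∀ n ≤ N, ∀ x ∈ Wtil, Scomp T j a n x ∈ F n := by
    intro n hn
    induction n with
    | zero => intro x hx; simpa [Scomp, hF0] using hx
    | succ n ih =>
      intro x hx
      have hn' : n ≤ N := Nat.le_of_succ_le hn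
      have hy := ih hn' x hx
      have : Scomp T j a (n+1) x = Sl T (a n) (Scomp T j a n x) := rfl
      rw [this, Sl]
      exact (F (n+1)).smul_mem _ (hdiag n hn _ hy)
  have hii : ∀ x ∈ Wtil, Scomp T j a N x = 0 := by
    intro x hx
    have := hmem N le_rfl x hx
    rw [hFN] at this
    simpa using this
  refine ⟨hpoly N, hi N le_rfl, hii, ?_⟩
  intro x
  obtain ⟨p, hp⟩ := hpoly N
  have hcomm : T (Scomp T j a N x) = Scomp T j a N (T x) := by
    rw [hp]
    have hX : aeval T (X : Polynomial ℝ) = T := aeval_X T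
    have : T ∘ₗ aeval T p = aeval T p ∘ₗ T := by
      rw [← Module.End.mul_eq_comp, ← Module.End.mul_eq_comp]
      calc T * aeval T p = aeval T (X * p) := by rw [map_mul, hX]
      _ = aeval T (p * X) := by rw [mul_comm]
      _ = aeval T p * T := by rw [map_mul, hX]
    exact (LinearMap.congr_fun this x)
  rw [hcomm]
  exact hii (T x) (hrange ⟨x, rfl⟩)
end

section
/- Let S : W → W be any ℝ-linear map satisfying S x − x ∈ W̃ for every x ∈ W, S x = 0 for every x ∈ W̃, and T(S x) = 0 for every x ∈ W. Then: (a) for every x ∈ W, the element S x is the unique y ∈ W with y − x ∈ W̃ and T y = 0; and (b) S maps W̄ into W̄, and the quotient projection π : W̄ → W̄ ⧸ W̃ restricts to a linear bijection from {y ∈ W̄ : T y = 0} onto W̄ ⧸ W̃, with inverse induced by S. (Abstract form of parts (1) and (2) of Theorem 3.3 of the paper, characterizing the splitting operator.) -/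
open Polynomial

/-- Abstract form of parts (1) and (2) of Theorem 3.3, characterizing the splitting operator:
(a) `S x` is the unique element `y` with `y − x ∈ W̃` and `T y = 0`; (b) `S` maps `W̄` to `W̄`
and the quotient projection `π : W̄ → W̄ ⧸ W̃` restricts to a linear bijection from
`{y ∈ W̄ : T y = 0}` onto `W̄ ⧸ W̃`, with inverse induced by `S`. -/
theorem splitting_operator_characterization {W : Type*} [AddCommGroup W] [Module ℝ W]
    (Wtil Wbar : Submodule ℝ W) (hWW : Wtil ≤ Wbar)
    (T : Module.End ℝ W) (hrange : LinearMap.range T ≤ Wtil)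
    (N : ℕ) (F : ℕ → Submodule ℝ W)
    (hF0 : F 0 = Wtil) (hFN : F N = ⊥)
    (hdec : ∀ ℓ : ℕ, F (ℓ + 1) ≤ F ℓ)
    (hTF : ∀ ℓ : ℕ, ∀ x ∈ F ℓ, T x ∈ F ℓ)
    (j : ℕ → ℕ) (a : (ℓ : ℕ) → Fin (j ℓ) → ℝ)
    (ha0 : ∀ ℓ < N, ∀ r, a ℓ r ≠ 0)
    (hainj : ∀ ℓ < N, Function.Injective (a ℓ))
    (hdiag : ∀ ℓ < N, ∀ x ∈ F ℓ,
      (aeval T (∏ r : Fin (j ℓ), (X - C (a ℓ r)))) x ∈ F (ℓ + 1))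
    (S : Module.End ℝ W)
    (hS1 : ∀ x : W, S x - x ∈ Wtil)
    (hS2 : ∀ x ∈ Wtil, S x = 0)
    (hS3 : ∀ x : W, T (S x) = 0) :
    (∀ x : W, (S x - x ∈ Wtil ∧ T (S x) = 0) ∧
      ∀ y : W, y - x ∈ Wtil → T y = 0 → y = S x) ∧
    (∀ x ∈ Wbar, S x ∈ Wbar) ∧
    Function.Bijective (fun y : {y : Wbar // T (y : W) = 0} =>
      (Wtil.comap Wbar.subtype).mkQ y.1) ∧
    (∀ x : Wbar, ∃ h : S (x : W) ∈ Wbar,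
      T (S (x : W)) = 0 ∧
      (Wtil.comap Wbar.subtype).mkQ ⟨S (x : W), h⟩ = (Wtil.comap Wbar.subtype).mkQ x) := by
  -- Step 1: if `T x = 0` then polynomial evaluation collapses to constant term
  have haev : ∀ (p : ℝ[X]) (x : W), T x = 0 → (aeval T p) x = p.eval 0 • x := by
    intro p x hx
    induction p using Polynomial.induction_on' with
    | add p q hp hq => simp [hp, hq, add_smul]
    | monomial n c =>
      rw [Polynomial.aeval_monomial, Polynomial.eval_monomial]
      cases n with
      | zero => simp [Algebra.algebraMap_eq_smul_one]
      | succ m =>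
        have hTn : (T ^ (m + 1)) x = 0 := by
          rw [pow_succ, Module.End.mul_apply, hx, map_zero]
        simp [Module.End.mul_apply, hTn]
  -- Step 2: F is antitone
  have hanti : ∀ m n : ℕ, m ≤ n → F n ≤ F m := by
    intro m n h
    induction h with
    | refl => exact le_rfl
    | step _ ih => exact le_trans (hdec _) ih
  -- Step 3: kernel of T in Wtil is trivial
  have hker : ∀ x ∈ Wtil, T x = 0 → x = 0 := by
    have key : ∀ d ℓ : ℕ, N ≤ ℓ + d → ∀ x ∈ F ℓ, T x = 0 → x = 0 := by
      intro d
      induction d with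
      | zero =>
        intro ℓ hℓ x hxF _
        have : x ∈ F N := hanti N ℓ (by omega) hxF
        rw [hFN] at this
        simpa using this
      | succ d ih =>
        intro ℓ hℓ x hxF hxT
        by_cases hc : ℓ < N
        · have hp := hdiag ℓ hc x hxF
          rw [haev _ _ hxT] at hp
          have hc0 : (∏ r : Fin (j ℓ), (X - C (a ℓ r)) : ℝ[X]).eval 0 ≠ 0 := by
            rw [Polynomial.eval_prod]
            apply Finset.prod_ne_zero_iff.mpr
            intro r _
            simp only [Polynomial.eval_sub, Polynomial.eval_X, Polynomial.eval_C, zero_sub,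
              neg_ne_zero]
            exact ha0 ℓ hc r
          have hx1 : x ∈ F (ℓ + 1) := by
            have h2 := (F (ℓ + 1)).smul_mem
              (((∏ r : Fin (j ℓ), (X - C (a ℓ r)) : ℝ[X]).eval 0)⁻¹) hp
            rwa [inv_smul_smul₀ hc0] at h2
          exact ih (ℓ + 1) (by omega) x hx1 hxT
        · have : x ∈ F N := hanti N ℓ (by omega) hxF
          rw [hFN] at this
          simpa using this
    intro x hx hTx
    exact key N 0 (by omega) x (by rwa [hF0]) hTx
  -- Step 4: uniqueness of the splitting
  have huniq : ∀ x y : W, y - x ∈ Wtil → T y = 0 → y = S x := by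
    intro x y hy hTy
    have hmem : y - S x ∈ Wtil := by
      have h : y - S x = (y - x) - (S x - x) := by abel
      rw [h]
      exact Wtil.sub_mem hy (hS1 x)
    have hT0 : T (y - S x) = 0 := by
      rw [map_sub, hTy, hS3, sub_zero]
    exact sub_eq_zero.mp (hker _ hmem hT0)
  -- Step 5: S maps Wbar to Wbar
  have hSbar : ∀ x ∈ Wbar, S x ∈ Wbar := by
    intro x hx
    have h : S x = (S x - x) + x := by abel
    rw [h]
    exact Wbar.add_mem (hWW (hS1 x)) hx
  refine ⟨fun x => ⟨⟨hS1 x, hS3 x⟩, fun y hy hTy => huniq x y hy hTy⟩, hSbar, ⟨?_, ?_⟩, ?_⟩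
  · -- injective
    rintro ⟨y₁, hy₁⟩ ⟨y₂, hy₂⟩ h
    simp only [Submodule.mkQ_apply] at h
    rw [Submodule.Quotient.eq] at h
    have hmem : (y₁ : W) - (y₂ : W) ∈ Wtil := by
      have := h
      simpa using this
    have hT0 : T ((y₁ : W) - (y₂ : W)) = 0 := by rw [map_sub, hy₁, hy₂, sub_zero]
    have := hker _ hmem hT0
    exact Subtype.ext (Subtype.ext (sub_eq_zero.mp this))
  · -- surjective
    intro q
    obtain ⟨x, rfl⟩ := Submodule.mkQ_surjective _ q
    refine ⟨⟨⟨S (x : W), hSbar _ x.2⟩, hS3 x⟩, ?_⟩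
    simp only [Submodule.mkQ_apply]
    rw [Submodule.Quotient.eq]
    simpa using hS1 (x : W)
  · -- inverse induced by S
    intro x
    refine ⟨hSbar _ x.2, hS3 x, ?_⟩
    simp only [Submodule.mkQ_apply]
    rw [Submodule.Quotient.eq]
    simpa using hS1 (x : W)
end

section
/- Fix ℓ < N with j_ℓ ≥ 1 and define the ℝ-linear map Q̃^ℓ := ∑_{r=1}^{j_ℓ} (1/(a^ℓ_r · ∏_{s≠r}(a^ℓ_r − a^ℓ_s))) · ∏_{s≠r}(T − a^ℓ_s·id) : W → W (the Lagrange interpolation polynomial of x ↦ 1/x at the nodes a^ℓ_1, …, a^ℓ_{j_ℓ}, evaluated at T). Then for every x ∈ F ℓ one has x − T(Q̃^ℓ x) ∈ F (ℓ+1). (Abstract form of Lemma 3.4 of the paper.) -/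
open Polynomial

lemma aux_aeval_mem {W : Type*} [AddCommGroup W] [Module ℝ W]
    (T : Module.End ℝ W) (S : Submodule ℝ W) (hS : ∀ x ∈ S, T x ∈ S)
    (p : ℝ[X]) : ∀ x ∈ S, (aeval T p) x ∈ S := by
  induction p using Polynomial.induction_on' with
  | add p q hp hq =>
    intro x hx
    simp only [map_add, LinearMap.add_apply]
    exact S.add_mem (hp x hx) (hq x hx)
  | monomial n c =>
    intro x hx
    have hpow : ∀ n : ℕ, (T ^ n) x ∈ S := by
      intro n; induction n with
      | zero => simpa
      | succ n ih => rw [pow_succ']; exact hS _ ih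
    simp only [aeval_monomial, Module.End.mul_apply, Module.algebraMap_end_apply,
      LinearMap.map_smul_of_tower]
    exact S.smul_mem _ (hpow n)

/-- Abstract form of Lemma 3.4: for the Lagrange-interpolation operator
`Q̃^ℓ = ∑_r (1/(a^ℓ_r · ∏_{s≠r}(a^ℓ_r − a^ℓ_s))) · ∏_{s≠r}(T − a^ℓ_s·id)` one has
`x − T(Q̃^ℓ x) ∈ F(ℓ+1)` for every `x ∈ F ℓ`. -/
theorem lagrange_inverse_mod_filtration {W : Type*} [AddCommGroup W] [Module ℝ W]
    (Wtil Wbar : Submodule ℝ W) (hWW : Wtil ≤ Wbar)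
    (T : Module.End ℝ W) (hrange : LinearMap.range T ≤ Wtil)
    (N : ℕ) (F : ℕ → Submodule ℝ W)
    (hF0 : F 0 = Wtil) (hFN : F N = ⊥)
    (hdec : ∀ ℓ : ℕ, F (ℓ + 1) ≤ F ℓ)
    (hTF : ∀ ℓ : ℕ, ∀ x ∈ F ℓ, T x ∈ F ℓ)
    (j : ℕ → ℕ) (a : (ℓ : ℕ) → Fin (j ℓ) → ℝ)
    (ha0 : ∀ ℓ < N, ∀ r, a ℓ r ≠ 0)
    (hainj : ∀ ℓ < N, Function.Injective (a ℓ))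
    (hdiag : ∀ ℓ < N, ∀ x ∈ F ℓ,
      (aeval T (∏ r : Fin (j ℓ), (X - C (a ℓ r)))) x ∈ F (ℓ + 1))
    (ℓ : ℕ) (hℓ : ℓ < N) (hj : 1 ≤ j ℓ) :
    ∀ x ∈ F ℓ,
      x - T ((aeval T (∑ r : Fin (j ℓ),
        C (1 / (a ℓ r * ∏ s ∈ Finset.univ.erase r, (a ℓ r - a ℓ s))) *
          ∏ s ∈ Finset.univ.erase r, (X - C (a ℓ s)))) x) ∈ F (ℓ + 1) := by
  intro x hx
  set Q : ℝ[X] := ∑ r : Fin (j ℓ),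
      C (1 / (a ℓ r * ∏ s ∈ Finset.univ.erase r, (a ℓ r - a ℓ s))) *
        ∏ s ∈ Finset.univ.erase r, (X - C (a ℓ s)) with hQdef
  set P : ℝ[X] := 1 - X * Q with hPdef
  have hroot : ∀ r : Fin (j ℓ), P.IsRoot (a ℓ r) := by
    intro r
    have hD : (∏ s ∈ Finset.univ.erase r, (a ℓ r - a ℓ s)) ≠ 0 := by
      apply Finset.prod_ne_zero_iff.mpr
      intro s hs
      have : s ≠ r := (Finset.mem_erase.mp hs).1
      exact sub_ne_zero_of_ne fun h => this ((hainj ℓ hℓ h).symm)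
    have har : a ℓ r ≠ 0 := ha0 ℓ hℓ r
    simp only [IsRoot, hPdef, hQdef, eval_sub, eval_one, eval_mul, eval_X,
      eval_finset_sum, eval_mul, eval_C, eval_prod, eval_sub, eval_X, eval_C]
    rw [Finset.sum_eq_single r]
    · field_simp
      ring
    · intro r' _ hr'
      apply mul_eq_zero_of_right
      apply Finset.prod_eq_zero (i := r) (Finset.mem_erase.mpr ⟨fun h => hr' h.symm, Finset.mem_univ r⟩)
      simp
    · intro h; exact absurd (Finset.mem_univ r) h
  have hdvd : (∏ r : Fin (j ℓ), (X - C (a ℓ r))) ∣ P := by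
    apply Finset.prod_dvd_of_coprime
    · exact (Polynomial.pairwise_coprime_X_sub_C (hainj ℓ hℓ)).set_pairwise _
    · intro r _; exact dvd_iff_isRoot.mpr (hroot r)
  obtain ⟨q, hq⟩ := hdvd
  have key : x - T ((aeval T Q) x) = (aeval T P) x := by
    simp [hPdef, map_sub, map_mul, Module.End.mul_apply]
  rw [key, hq, map_mul, Module.End.mul_apply]
  exact hdiag ℓ hℓ _ (aux_aeval_mem T (F ℓ) (hTF ℓ) q x hx)
end

section
/- There exists an ℝ-linear map Q : W → W which is given by a polynomial in T (there exists a polynomial p ∈ ℝ[X] with Q equal to the evaluation of p at T), which maps W̃ into W̃ and satisfies T(Q x) = x for every x ∈ W̃. In particular, T restricts to a linear automorphism of W̃ whose inverse is given by a polynomial in T. (Abstract form of Theorem 3.4 of the paper.) -/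
open Polynomial

/-- Abstract form of Theorem 3.4: there is an operator `Q`, given by a universal polynomial in
`T = ∂*_ρ ∘ 𝒟`, which maps `W̃` into `W̃` and is a right inverse for `T` on `W̃`; in
particular `T` restricts to a linear automorphism of `W̃`. -/
theorem Q_operator_exists {W : Type*} [AddCommGroup W] [Module ℝ W]
    (Wtil Wbar : Submodule ℝ W) (hWW : Wtil ≤ Wbar)
    (T : Module.End ℝ W) (hrange : LinearMap.range T ≤ Wtil)
    (N : ℕ) (F : ℕ → Submodule ℝ W)
    (hF0 : F 0 = Wtil) (hFN : F N = ⊥)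
    (hdec : ∀ ℓ : ℕ, F (ℓ + 1) ≤ F ℓ)
    (hTF : ∀ ℓ : ℕ, ∀ x ∈ F ℓ, T x ∈ F ℓ)
    (j : ℕ → ℕ) (a : (ℓ : ℕ) → Fin (j ℓ) → ℝ)
    (ha0 : ∀ ℓ < N, ∀ r, a ℓ r ≠ 0)
    (hainj : ∀ ℓ < N, Function.Injective (a ℓ))
    (hdiag : ∀ ℓ < N, ∀ x ∈ F ℓ,
      (aeval T (∏ r : Fin (j ℓ), (X - C (a ℓ r)))) x ∈ F (ℓ + 1)) :
    (∃ Q : Module.End ℝ W,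
      (∃ p : Polynomial ℝ, Q = aeval T p) ∧
      (∀ x ∈ Wtil, Q x ∈ Wtil) ∧
      (∀ x ∈ Wtil, T (Q x) = x)) ∧
    Function.Bijective
      (T.restrict (p := Wtil) (q := Wtil)
        (fun x _ => hrange (LinearMap.mem_range_self T x))) := by
  classical
  set P : Polynomial ℝ := ∏ ℓ ∈ Finset.range N, ∏ r : Fin (j ℓ), (X - C (a ℓ r)) with hP
  have hTW : ∀ x ∈ Wtil, T x ∈ Wtil := by
    intro x hx
    have := hTF 0 x (by rwa [hF0]); rwa [hF0] at this
  have hpow : ∀ n : ℕ, ∀ x ∈ Wtil, (T ^ n) x ∈ Wtil := by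
    intro n
    induction n with
    | zero => intro x hx; simpa using hx
    | succ n ih =>
      intro x hx
      rw [pow_succ, Module.End.mul_apply]
      exact ih _ (hTW x hx)
  have haev : ∀ p : Polynomial ℝ, ∀ x ∈ Wtil, (aeval T p) x ∈ Wtil := by
    intro p
    induction p using Polynomial.induction_on' with
    | add p q hp hq =>
      intro x hx
      simp only [map_add, LinearMap.add_apply]
      exact Wtil.add_mem (hp x hx) (hq x hx)
    | monomial n cc =>
      intro x hx
      simp only [aeval_monomial, Module.End.mul_apply, Module.algebraMap_end_apply,
        LinearMap.smul_apply]
      exact Wtil.smul_mem _ (hpow n x hx)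
  have key : ∀ m ≤ N, ∀ x ∈ F 0,
      (aeval T (∏ ℓ ∈ Finset.range m, ∏ r : Fin (j ℓ), (X - C (a ℓ r)))) x ∈ F m := by
    intro m
    induction m with
    | zero => intro _ x hx; simpa using hx
    | succ m ih =>
      intro hm x hx
      rw [Finset.prod_range_succ, mul_comm, map_mul, Module.End.mul_apply]
      exact hdiag m (by omega) _ (ih (by omega) x hx)
  have hker : ∀ x ∈ Wtil, (aeval T P) x = 0 := by
    intro x hx
    have := key N le_rfl x (by rwa [hF0])
    rw [hFN, Submodule.mem_bot] at this
    exact this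
  set c : ℝ := P.coeff 0 with hc
  have hcne : c ≠ 0 := by
    rw [hc, Polynomial.coeff_zero_eq_eval_zero, hP, Polynomial.eval_prod]
    refine Finset.prod_ne_zero_iff.2 fun ℓ hℓ => ?_
    rw [Polynomial.eval_prod]
    refine Finset.prod_ne_zero_iff.2 fun r _ => ?_
    simp only [eval_sub, eval_X, eval_C, zero_sub]
    exact neg_ne_zero.2 (ha0 ℓ (Finset.mem_range.1 hℓ) r)
  have hXdiv : X * P.divX = P - C c := by
    rw [eq_sub_iff_add_eq, hc]
    exact P.X_mul_divX_add
  set qp : Polynomial ℝ := C (-c⁻¹) * P.divX with hqp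
  set Q : Module.End ℝ W := aeval T qp with hQ
  have hTQ : ∀ x ∈ Wtil, T (Q x) = x := by
    intro x hx
    have h1 : T (Q x) = (aeval T (X * qp)) x := by
      rw [map_mul, aeval_X, Module.End.mul_apply]
    have hXqp : X * qp = C (-c⁻¹) * (P - C c) := by rw [hqp, ← hXdiv]; ring
    rw [h1, hXqp]
    simp only [map_mul, map_sub, aeval_C, Module.End.mul_apply, LinearMap.sub_apply,
      Module.algebraMap_end_apply, hker x hx, zero_sub, smul_neg, smul_smul, neg_mul, neg_neg,
      inv_mul_cancel₀ hcne, one_smul]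
    simp
  have hQW : ∀ x ∈ Wtil, Q x ∈ Wtil := fun x hx => haev qp x hx
  have hQT : ∀ x ∈ Wtil, Q (T x) = x := by
    intro x hx
    have : Q (T x) = (aeval T (qp * X)) x := by
      rw [map_mul, aeval_X, Module.End.mul_apply]
    rw [this, mul_comm, map_mul, aeval_X, Module.End.mul_apply]
    exact hTQ x hx
  refine ⟨⟨Q, ⟨qp, rfl⟩, hQW, hTQ⟩, ?_, ?_⟩
  · rw [injective_iff_map_eq_zero]
    rintro ⟨x, hx⟩ h
    have hTx : T x = 0 := congrArg Subtype.val h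
    have : x = 0 := by rw [← hQT x hx, hTx, map_zero]
    exact Subtype.ext this
  · rintro ⟨y, hy⟩
    exact ⟨⟨Q y, hQW y hy⟩, Subtype.ext (hTQ y hy)⟩
end

section
/- Assume that the composite ∂_k ∘ D_{k−1} : V_{k−1} → V_{k−1} is injective on W̃_{k−1} (the range of ∂_k). Then every φ ∈ V_k satisfying ∂_{k+1}(D_k φ) + D_{k−1}(∂_k φ) = 0 also satisfies ∂_k φ = 0 and ∂_{k+1}(D_k φ) = 0. Consequently, the kernel of the Laplacian □_k := ∂_{k+1}∘D_k + D_{k−1}∘∂_k equals {φ ∈ V_k : ∂_k φ = 0 and ∂_{k+1}(D_k φ) = 0}. (Abstract form of Proposition 3.6(1) of the paper.) -/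
/-- Abstract form of Proposition 3.6(1): if `∂_k ∘ D_{k−1}` is injective on
`W̃_{k−1} = range ∂_k`, then every `φ` with `□_k φ = ∂_{k+1}(D_k φ) + D_{k−1}(∂_k φ) = 0`
satisfies `∂_k φ = 0` and `∂_{k+1}(D_k φ) = 0`; consequently the kernel of the Laplacian
`□_k` equals `{φ : ∂_k φ = 0 ∧ ∂_{k+1}(D_k φ) = 0}`. -/
theorem laplacian_kernel {Vkm Vk Vkp : Type*}
    [AddCommGroup Vkm] [Module ℝ Vkm] [AddCommGroup Vk] [Module ℝ Vk]
    [AddCommGroup Vkp] [Module ℝ Vkp]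
    (dk : Vk →ₗ[ℝ] Vkm)    -- ∂_k
    (dk1 : Vkp →ₗ[ℝ] Vk)   -- ∂_{k+1}
    (hcc : ∀ z : Vkp, dk (dk1 z) = 0)
    (Dkm : Vkm →ₗ[ℝ] Vk)   -- D_{k−1}
    (Dk : Vk →ₗ[ℝ] Vkp)    -- D_k
    (hinj : Set.InjOn (fun x : Vkm => dk (Dkm x)) (LinearMap.range dk : Set Vkm)) :
    (∀ φ : Vk, dk1 (Dk φ) + Dkm (dk φ) = 0 → dk φ = 0 ∧ dk1 (Dk φ) = 0) ∧
    {φ : Vk | dk1 (Dk φ) + Dkm (dk φ) = 0} =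
      {φ : Vk | dk φ = 0 ∧ dk1 (Dk φ) = 0} := by
  have key : ∀ φ : Vk, dk1 (Dk φ) + Dkm (dk φ) = 0 → dk φ = 0 ∧ dk1 (Dk φ) = 0 := by
    intro φ h
    have h1 : dk (dk1 (Dk φ)) + dk (Dkm (dk φ)) = 0 := by
      rw [← map_add, h, map_zero]
    rw [hcc, zero_add] at h1
    have hmem : dk φ ∈ (LinearMap.range dk : Set Vkm) := ⟨φ, rfl⟩
    have hzero : (0 : Vkm) ∈ (LinearMap.range dk : Set Vkm) := ⟨0, map_zero dk⟩
    have h2 : dk φ = 0 := hinj hmem hzero (by simpa using h1)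
    refine ⟨h2, ?_⟩
    have := h
    rw [h2, map_zero, add_zero] at this
    exact this
  refine ⟨key, ?_⟩
  ext φ
  constructor
  · exact key φ
  · rintro ⟨h1, h2⟩
    simp [Set.mem_setOf_eq, h1, h2]
end

section
/- Let A be a finite-dimensional real vector space equipped with: a decreasing family of subspaces (A^i)_{i∈ℤ} with A^{i+1} ⊆ A^i for all i, A^i = A for all sufficiently small i, and A^i = 0 for all sufficiently large i; a bilinear bracket {·,·} : A × A → A satisfying {A^i, A^j} ⊆ A^{i+j} for all i, j; and a nondegenerate symmetric bilinear form B on A which is invariant, i.e. B({x,y},z) = −B(y,{x,z}) for all x,y,z ∈ A, and such that for every i > 0 the subspace A^i equals {x ∈ A : B(x,y) = 0 for all y ∈ A^{−i+1}}. Then there exist natural numbers n, m and a basis of A of the form (X_1,…,X_n, A_1,…,A_m, Z_1,…,Z_n) such that: Z_i ∈ A^1 for all i; A_r ∈ A^0 for all r; B(X_i, X_j) = 0 for all i, j; B(A_r, X_i) = 0 for all r, i; B(X_i, Z_j) = δ_{ij} for all i, j; and {Z_i, X_i} ∈ A^0 for every i. Moreover, there exist elements A'_1,…,A'_m ∈ A^0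 with B(A'_r, A_s) = δ_{rs}, B(A'_r, X_i) = 0 and B(A'_r, Z_i) = 0 for all r, s, i, so that the B-dual basis of (X_1,…,X_n, A_1,…,A_m, Z_1,…,Z_n) is (Z_1,…,Z_n, A'_1,…,A'_m, X_1,…,X_n). (This is the fiberwise linear-algebra content of Lemma 2.3 of the paper on the existence of adapted local frames for the relative adjoint tractor bundle, applied to the filtered Lie algebra 𝔭/𝔭_+ with the form induced by the Killing form.) -/
set_option maxHeartbeats 1000000
set_option linter.unusedSectionVars false
set_option linter.unusedVariables false

open Module Submodule

section Aux

variable {A : Type*} [AddCommGroup A] [Module ℝ A] [FiniteDimensional ℝ A]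

lemma extend_span_aux (W : Submodule ℝ A) :
    ∀ (d : ℕ) (s : Set A), LinearIndependent ℝ ((↑) : s → A) → Submodule.span ℝ s ≤ W →
      finrank ℝ W - finrank ℝ (Submodule.span ℝ s) ≤ d →
      ∃ t : Set A, s ⊆ t ∧ t ⊆ (W : Set A) ∧ LinearIndependent ℝ ((↑) : t → A) ∧
        Submodule.span ℝ t = W := by
  intro d
  induction d with
  | zero =>
    intro s hs hle hd
    have h1 : finrank ℝ W ≤ finrank ℝ (Submodule.span ℝ s) := by omega
    have : Submodule.span ℝ s = W := Submodule.eq_of_le_of_finrank_le hle h1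
    refine ⟨s, le_refl _, ?_, hs, this⟩
    rw [← this]
    exact Submodule.subset_span
  | succ d ih =>
    intro s hs hle hd
    by_cases heq : Submodule.span ℝ s = W
    · exact ⟨s, le_refl _, heq ▸ Submodule.subset_span, hs, heq⟩
    · have hlt : Submodule.span ℝ s < W := lt_of_le_of_ne hle heq
      obtain ⟨x, hxW, hxs⟩ := SetLike.exists_of_lt hlt
      have hxns : x ∉ s := fun h => hxs (Submodule.subset_span h)
      have hs' : LinearIndependent ℝ (fun b : (insert x s : Set A) => (b : A)) :=
        (linearIndepOn_id_insert hxns).2 ⟨hs, hxs⟩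
      have hle' : Submodule.span ℝ (insert x s) ≤ W := by
        rw [Submodule.span_insert]
        exact sup_le ((Submodule.span_singleton_le_iff_mem x W).2 hxW) hle
      have hrk : finrank ℝ (Submodule.span ℝ s) < finrank ℝ (Submodule.span ℝ (insert x s)) := by
        apply Submodule.finrank_lt_finrank_of_lt
        refine lt_of_le_of_ne (Submodule.span_mono (Set.subset_insert x s)) ?_
        intro h
        exact hxs (h ▸ Submodule.subset_span (Set.mem_insert x s))
      obtain ⟨t, hst, htW, htLI, htspan⟩ := ih (insert x s) hs' hle' (by omega)
      exact ⟨t, (Set.subset_insert x s).trans hst, htW, htLI, htspan⟩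

lemma extend_span (W : Submodule ℝ A) (s : Set A) (hs : LinearIndependent ℝ ((↑) : s → A))
    (hle : Submodule.span ℝ s ≤ W) :
    ∃ t : Set A, s ⊆ t ∧ t ⊆ (W : Set A) ∧ LinearIndependent ℝ ((↑) : t → A) ∧
      Submodule.span ℝ t = W :=
  extend_span_aux W _ s hs hle (le_refl _)

lemma Ai_mono (Ai : ℤ → Submodule ℝ A) (hdec : ∀ i : ℤ, Ai (i + 1) ≤ Ai i) :
    ∀ i j : ℤ, i ≤ j → Ai j ≤ Ai i := by
  have key : ∀ (c : ℕ) (i : ℤ), Ai (i + c) ≤ Ai i := by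
    intro c
    induction c with
    | zero => simp
    | succ c ih =>
      intro i
      have : (i + ((c + 1 : ℕ) : ℤ)) = (i + 1) + c := by push_cast; ring
      rw [this]
      exact (ih (i + 1)).trans (hdec i)
  intro i j hij
  obtain ⟨c, rfl⟩ := Int.le.dest hij
  exact key c i

lemma flag_basis (Ai : ℤ → Submodule ℝ A) (hdec : ∀ i : ℤ, Ai (i + 1) ≤ Ai i)
    (N : ℤ) (hbot : ∀ l : ℤ, N ≤ l → Ai l = ⊥) :
    ∀ (j : ℕ), ∃ s : Set A, LinearIndependent ℝ ((↑) : s → A) ∧ s ⊆ (Ai (N - j) : Set A) ∧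
      ∀ l : ℤ, N - j ≤ l → Submodule.span ℝ (s ∩ Ai l) = Ai l := by
  intro j
  induction j with
  | zero =>
    refine ⟨∅, linearIndependent_empty _ _, Set.empty_subset _, fun l hl => ?_⟩
    rw [hbot l (by exact_mod_cast by simpa using hl)]
    simp
  | succ j ih =>
    obtain ⟨s, hsLI, hsub, hspan⟩ := ih
    set m : ℤ := N - (j + 1 : ℕ) with hm
    have hm1 : N - (j : ℕ) = m + 1 := by push_cast [hm]; ring
    have hss : s ∩ (Ai (m + 1) : Set A) = s := Set.inter_eq_self_of_subset_left (by rw [← hm1]; exact hsub)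
    have hspans : Submodule.span ℝ s = Ai (m + 1) := by
      have := hspan (m + 1) (le_of_eq hm1)
      rwa [hss] at this
    obtain ⟨t, hst, htW, htLI, htspan⟩ := extend_span (Ai m) s hsLI (hspans ▸ hdec m)
    refine ⟨t, htLI, htW, fun l hl => ?_⟩
    have hl' : m ≤ l := hl
    rcases eq_or_lt_of_le hl' with h | h
    · rw [Set.inter_eq_self_of_subset_left (h ▸ htW), ← h, htspan]
    · have hl1 : m + 1 ≤ l := h
      have : t ∩ (Ai l : Set A) = s ∩ (Ai l : Set A) := by
        apply Set.Subset.antisymm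
        · rintro x ⟨hxt, hxl⟩
          refine ⟨?_, hxl⟩
          by_contra hxs
          have hins : LinearIndependent ℝ (fun b : (insert x s : Set A) => (b : A)) :=
            (show LinearIndepOn ℝ id t from htLI).mono (Set.insert_subset hxt hst)
          have := ((linearIndepOn_id_insert hxs).1 hins).2
          exact this (hspans ▸ Ai_mono Ai hdec (m + 1) l hl1 hxl)
        · exact Set.inter_subset_inter_left _ hst
      rw [this, hspan l (by rw [hm1]; exact hl1)]

end Aux

/-- Fiberwise linear-algebra content of Lemma 2.3: existence of adapted frames (bases) for a
finite-dimensional filtered Lie algebra `A` (modelled on `𝔭/𝔭₊`) with an invariant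
nondegenerate symmetric bilinear form `B` compatible with the filtration. -/
theorem adapted_frame_exists {A : Type*} [AddCommGroup A] [Module ℝ A]
    [FiniteDimensional ℝ A]
    (Ai : ℤ → Submodule ℝ A)
    (hdec : ∀ i : ℤ, Ai (i + 1) ≤ Ai i)
    (hexh : ∃ i₀ : ℤ, ∀ i ≤ i₀, Ai i = ⊤)
    (hsep : ∃ i₁ : ℤ, ∀ i : ℤ, i₁ ≤ i → Ai i = ⊥)
    (br : A →ₗ[ℝ] A →ₗ[ℝ] A)
    (hbr : ∀ (i j : ℤ) (x y : A), x ∈ Ai i → y ∈ Ai j → br x y ∈ Ai (i + j))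
    (B : A →ₗ[ℝ] A →ₗ[ℝ] ℝ)
    (hsymm : ∀ x y : A, B x y = B y x)
    (hnondeg : ∀ x : A, (∀ y : A, B x y = 0) → x = 0)
    (hinv : ∀ x y z : A, B (br x y) z = - B y (br x z))
    (hann : ∀ i : ℤ, 0 < i → ∀ x : A, x ∈ Ai i ↔ ∀ y ∈ Ai (1 - i), B x y = 0) :
    ∃ (n m : ℕ) (Xb Zb : Fin n → A) (Ab A'b : Fin m → A),
      LinearIndependent ℝ (Sum.elim Xb (Sum.elim Ab Zb)) ∧
      Submodule.span ℝ (Set.range (Sum.elim Xb (Sum.elim Ab Zb))) = ⊤ ∧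
      (∀ i, Zb i ∈ Ai 1) ∧
      (∀ r, Ab r ∈ Ai 0) ∧
      (∀ i j, B (Xb i) (Xb j) = 0) ∧
      (∀ r i, B (Ab r) (Xb i) = 0) ∧
      (∀ i j, B (Xb i) (Zb j) = if i = j then 1 else 0) ∧
      (∀ i, br (Zb i) (Xb i) ∈ Ai 0) ∧
      (∀ r, A'b r ∈ Ai 0) ∧
      (∀ p q : Fin n ⊕ (Fin m ⊕ Fin n),
        B (Sum.elim Zb (Sum.elim A'b Xb) p) (Sum.elim Xb (Sum.elim Ab Zb) q) =
          if p = q then 1 else 0) := by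
  classical
  obtain ⟨i₁, hi₁⟩ := hsep
  set N : ℤ := max i₁ 1 with hNdef
  have hN1 : (1 : ℤ) ≤ N := le_max_right _ _
  have hbot : ∀ l : ℤ, N ≤ l → Ai l = ⊥ := fun l hl => hi₁ l ((le_max_left _ _).trans hl)
  have hmono : ∀ i j : ℤ, i ≤ j → Ai j ≤ Ai i := Ai_mono Ai hdec
  have hrefl : LinearMap.BilinForm.IsRefl B := fun x y h => by rw [hsymm]; exact h
  have hnd : LinearMap.BilinForm.Nondegenerate B :=
    ⟨hnondeg, fun y h => hnondeg y (fun x => by rw [hsymm]; exact h x)⟩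
  have hOi : ∀ i : ℤ, 0 < i → Ai i = LinearMap.BilinForm.orthogonal B (Ai (1 - i)) := by
    intro i hi
    ext x
    rw [hann i hi x, LinearMap.BilinForm.mem_orthogonal_iff]
    constructor
    · intro h y hy
      show B y x = 0
      rw [hsymm]
      exact h y hy
    · intro h y hy
      have : B y x = 0 := h y hy
      rwa [hsymm] at this
  have h1 : Ai 1 = LinearMap.BilinForm.orthogonal B (Ai 0) := by
    have := hOi 1 one_pos
    norm_num at this
    exact this
  have h0 : Ai 0 = LinearMap.BilinForm.orthogonal B (Ai 1) := by
    rw [h1, LinearMap.BilinForm.orthogonal_orthogonal hnd hrefl]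
  set d : ℕ := finrank ℝ A with hd
  -- flag basis for Ai 1
  obtain ⟨s, hsLI, hs1, hspanl⟩ := flag_basis Ai hdec N hbot (N - 1).toNat
  have hNt : N - ((N - 1).toNat : ℤ) = 1 := by
    have : ((N - 1).toNat : ℤ) = N - 1 := Int.toNat_of_nonneg (by omega)
    omega
  rw [hNt] at hs1 hspanl
  have hspan1 : Submodule.span ℝ s = Ai 1 := by
    rw [← hspanl 1 le_rfl, Set.inter_eq_self_of_subset_left hs1]
  have hsfin : s.Finite := hsLI.setFinite
  letI := hsfin.fintype
  set n : ℕ := Fintype.card s with hn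
  set e : s ≃ Fin n := Fintype.equivFin s with he
  set Z0 : Fin n → A := fun i => ((e.symm i : s) : A) with hZ0
  have hZ0LI : LinearIndependent ℝ Z0 := hsLI.comp e.symm e.symm.injective
  have hZ0range : Set.range Z0 = s := by
    have : Z0 = Subtype.val ∘ e.symm := rfl
    rw [this, Set.range_comp, Equiv.range_eq_univ, Set.image_univ, Subtype.range_coe]
  have hZ0mem : ∀ i, Z0 i ∈ Ai 1 := fun i => hs1 (e.symm i).2
  -- levels
  have hlev : ∀ i : Fin n, ∃ kk : ℤ, 1 ≤ kk ∧ Z0 i ∈ Ai kk ∧ Z0 i ∉ Ai (kk + 1) := by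
    intro i
    have hne : Z0 i ≠ 0 := hZ0LI.ne_zero i
    have hex : ∃ c : ℕ, Z0 i ∉ Ai (1 + c) := by
      refine ⟨(N - 1).toNat, ?_⟩
      have h1N : (1 : ℤ) + ((N - 1).toNat : ℤ) = N := by
        have : ((N - 1).toNat : ℤ) = N - 1 := Int.toNat_of_nonneg (by omega)
        omega
      rw [h1N, hbot N le_rfl]
      simpa using hne
    set c₀ := Nat.find hex with hc₀def
    have hc₀ : Z0 i ∉ Ai (1 + (c₀ : ℤ)) := Nat.find_spec hex
    have hpos : c₀ ≠ 0 := by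
      intro h
      apply hc₀
      rw [h]
      simpa using hZ0mem i
    refine ⟨(c₀ : ℤ), by omega, ?_, by rwa [show ((c₀ : ℤ) + 1) = 1 + (c₀ : ℤ) by ring]⟩
    have hmem : ¬ (Z0 i ∉ Ai (1 + ((c₀ - 1 : ℕ) : ℤ))) := Nat.find_min hex (by omega)
    rw [not_not] at hmem
    have hcc : (1 : ℤ) + ((c₀ - 1 : ℕ) : ℤ) = (c₀ : ℤ) := by
      have h1c : (1 : ℕ) ≤ c₀ := by omega
      push_cast [Nat.cast_sub h1c]
      ring
    rwa [hcc] at hmem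
  choose k hk1 hkmem hknot using hlev
  -- dimension bookkeeping
  have hnrank : finrank ℝ (Ai 1) = n := by
    rw [← hspan1, ← hZ0range]
    rw [finrank_span_eq_card hZ0LI, Fintype.card_fin]
  have hrk1 : finrank ℝ (Ai 1) = d - finrank ℝ (Ai 0) := by
    rw [h1, LinearMap.BilinForm.finrank_orthogonal hnd]
  have hrk0led : finrank ℝ (Ai 0) ≤ d := Submodule.finrank_le _
  -- dual vectors
  have hX0 : ∀ i : Fin n, ∃ x : A, x ∈ Ai (-(k i)) ∧
      ∀ j, B x (Z0 j) = (if i = j then (1 : ℝ) else 0) := by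
    intro i
    set kk : ℤ := k i with hkk
    have hOk : Ai (kk + 1) = LinearMap.BilinForm.orthogonal B (Ai (-kk)) := by
      have := hOi (kk + 1) (by have := hk1 i; omega)
      rwa [show (1 - (kk + 1)) = -kk by ring] at this
    set W : Submodule ℝ A := Ai (-kk) with hW
    have hA0W : Ai 0 ≤ W := hmono (-kk) 0 (by have := hk1 i; omega)
    set h : W →ₗ[ℝ] (Fin n → ℝ) :=
      LinearMap.pi (fun j => (B.flip (Z0 j)).comp W.subtype) with hh
    have hhapp : ∀ (w : W) j, h w j = B (w : A) (Z0 j) := fun w j => rfl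
    set T : Finset (Fin n) := Finset.univ.filter (fun j => Z0 j ∈ Ai (kk + 1)) with hT
    set π : (Fin n → ℝ) →ₗ[ℝ] ({ j // j ∈ T } → ℝ) :=
      LinearMap.funLeft ℝ ℝ ((↑) : { j // j ∈ T } → Fin n) with hπ
    have hπsurj : Function.Surjective π :=
      LinearMap.funLeft_surjective_of_injective ℝ ℝ _ Subtype.val_injective
    have hkerπ : ∀ v : Fin n → ℝ, v ∈ LinearMap.ker π ↔ ∀ j ∈ T, v j = 0 := by
      intro v
      rw [LinearMap.mem_ker, funext_iff]
      constructor
      · intro hv j hj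
        exact hv ⟨j, hj⟩
      · intro hv t
        exact hv t.1 t.2
    have hrange : LinearMap.range h ≤ LinearMap.ker π := by
      rintro _ ⟨w, rfl⟩
      rw [hkerπ]
      intro j hj
      rw [hhapp]
      have hjmem : Z0 j ∈ Ai (kk + 1) := by
        simpa [hT] using hj
      rw [hOk] at hjmem
      exact hjmem (w : A) w.2
    have hkerh : LinearMap.ker h = Submodule.comap W.subtype (Ai 0) := by
      ext w
      rw [LinearMap.mem_ker, funext_iff, Submodule.mem_comap]
      constructor
      · intro hw
        have hker : Ai 1 ≤ LinearMap.ker (B.flip (w : A)) := by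
          rw [← hspan1, Submodule.span_le]
          rintro z hz
          rw [← hZ0range] at hz
          obtain ⟨j, rfl⟩ := hz
          have : B (w : A) (Z0 j) = 0 := by
            have := hw j
            simpa [hhapp] using this
          rw [SetLike.mem_coe, LinearMap.mem_ker, LinearMap.flip_apply, hsymm]
          exact this
        show (w : A) ∈ Ai 0
        rw [h0]
        intro z hz
        have := hker hz
        rw [LinearMap.mem_ker, LinearMap.flip_apply] at this
        exact this
      · intro hw j
        have hz : Z0 j ∈ LinearMap.BilinForm.orthogonal B (Ai 0) := h1 ▸ hZ0mem j
        have : B (w : A) (Z0 j) = 0 := hz (w : A) hw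
        simpa [hhapp] using this
    have hkerhrank : finrank ℝ (LinearMap.ker h) = finrank ℝ (Ai 0) := by
      rw [hkerh]
      exact LinearEquiv.finrank_eq (Submodule.comapSubtypeEquivOfLe hA0W)
    have hrn : finrank ℝ (LinearMap.range h) + finrank ℝ (Ai 0) = finrank ℝ W := by
      rw [← hkerhrank]
      exact LinearMap.finrank_range_add_finrank_ker h
    -- card T = finrank (Ai (kk+1))
    have hTcard : finrank ℝ (Ai (kk + 1)) = T.card := by
      set b : { j // j ∈ T } → A := fun t => Z0 t.1 with hb
      have hbLI : LinearIndependent ℝ b := hZ0LI.comp _ Subtype.val_injective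
      have hbrange : Set.range b = s ∩ (Ai (kk + 1) : Set A) := by
        ext x
        constructor
        · rintro ⟨⟨j, hj⟩, rfl⟩
          refine ⟨by rw [← hZ0range]; exact Set.mem_range_self _, ?_⟩
          simpa [hT] using hj
        · rintro ⟨hxs, hxk⟩
          rw [← hZ0range] at hxs
          obtain ⟨j, rfl⟩ := hxs
          exact ⟨⟨j, by simpa [hT] using hxk⟩, rfl⟩
      have hbspan : Submodule.span ℝ (Set.range b) = Ai (kk + 1) := by
        rw [hbrange]
        exact hspanl (kk + 1) (by have := hk1 i; omega)
      rw [← hbspan, finrank_span_eq_card hbLI, Fintype.card_coe]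
    have hTrank : finrank ℝ (Ai (kk + 1)) = d - finrank ℝ W := by
      rw [hOk, LinearMap.BilinForm.finrank_orthogonal hnd]
    have hWled : finrank ℝ W ≤ d := Submodule.finrank_le _
    have h0W : finrank ℝ (Ai 0) ≤ finrank ℝ W := Submodule.finrank_mono hA0W
    -- finrank of ker π
    have hkerπrank : finrank ℝ (LinearMap.ker π) + T.card = n := by
      have := LinearMap.finrank_range_add_finrank_ker π
      rw [LinearMap.range_eq_top.2 hπsurj, finrank_top] at this
      have hcard1 : finrank ℝ ({ j // j ∈ T } → ℝ) = T.card := by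
        rw [Module.finrank_fintype_fun_eq_card, Fintype.card_coe]
      have hcard2 : finrank ℝ (Fin n → ℝ) = n := by
        rw [Module.finrank_fintype_fun_eq_card, Fintype.card_fin]
      omega
    have heq : LinearMap.range h = LinearMap.ker π := by
      apply Submodule.eq_of_le_of_finrank_le hrange
      omega
    -- the target vector
    have hv : (fun j => if i = j then (1 : ℝ) else 0) ∈ LinearMap.ker π := by
      rw [hkerπ]
      intro j hj
      have hjmem : Z0 j ∈ Ai (kk + 1) := by simpa [hT] using hj
      have : i ≠ j := by
        rintro rfl
        exact hknot i hjmem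
      rw [if_neg this]
    rw [← heq] at hv
    obtain ⟨w, hw⟩ := hv
    exact ⟨(w : A), w.2, fun j => by rw [← congrFun hw j, hhapp]⟩
  choose X0 hX0mem hX0dual using hX0
  set S : Fin n → Fin n → ℝ := fun i j => B (X0 i) (X0 j) with hS
  set Xb : Fin n → A := fun i => X0 i - (2⁻¹ : ℝ) • ∑ j, S i j • Z0 j with hXb
  have hBZ0Z0 : ∀ i j, B (Z0 i) (Z0 j) = 0 := by
    intro i j
    have hzj : Z0 j ∈ LinearMap.BilinForm.orthogonal B (Ai 0) := h1 ▸ hZ0mem j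
    exact hzj (Z0 i) (hmono 0 1 zero_le_one (hZ0mem i))
  have hBXZ : ∀ i j, B (Xb i) (Z0 j) = if i = j then (1 : ℝ) else 0 := by
    intro i j
    rw [hXb]
    simp only [map_sub, map_smul, map_sum, LinearMap.sub_apply, LinearMap.smul_apply,
      LinearMap.sum_apply, LinearMap.coe_smul, Pi.smul_apply, smul_eq_mul]
    rw [hX0dual i j]
    rw [Finset.sum_eq_zero (fun l _ => by rw [hBZ0Z0 l j, mul_zero])]
    ring
  have hBZX : ∀ i j, B (Z0 i) (Xb j) = if i = j then (1 : ℝ) else 0 := by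
    intro i j
    rw [hsymm, hBXZ j i]
    simp [eq_comm]
  have hBXX : ∀ i j, B (Xb i) (Xb j) = 0 := by
    intro i j
    have step1 : B (Xb i) (X0 j) = S i j - 2⁻¹ * S i j := by
      rw [hXb]
      simp only [map_sub, map_smul, map_sum, LinearMap.sub_apply, LinearMap.smul_apply,
        LinearMap.sum_apply, LinearMap.coe_smul, Pi.smul_apply, smul_eq_mul]
      have hsum : ∑ l : Fin n, S i l * B (Z0 l) (X0 j) = S i j := by
        have : ∀ l : Fin n, S i l * B (Z0 l) (X0 j) = S i l * (if j = l then 1 else 0) := by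
          intro l
          rw [hsymm (Z0 l) (X0 j), hX0dual j l]
        simp only [this, mul_ite, mul_one, mul_zero]
        simp [eq_comm]
      rw [hsum]
    have hSsymm : S j i = S i j := hsymm _ _
    calc B (Xb i) (Xb j)
        = B (Xb i) (X0 j) - 2⁻¹ * ∑ l : Fin n, S j l * B (Xb i) (Z0 l) := by
          rw [hXb]
          simp only [map_sub, map_smul, map_sum, LinearMap.sub_apply, LinearMap.smul_apply,
            LinearMap.sum_apply, LinearMap.coe_smul, Pi.smul_apply, smul_eq_mul]
      _ = (S i j - 2⁻¹ * S i j) - 2⁻¹ * S j i := by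
          rw [step1]
          congr 1
          congr 1
          have : ∀ l : Fin n, S j l * B (Xb i) (Z0 l) = S j l * (if i = l then 1 else 0) := by
            intro l
            rw [hBXZ i l]
          simp only [this, mul_ite, mul_one, mul_zero]
          simp
      _ = 0 := by rw [hSsymm]; ring
  have hbrZX : ∀ i, br (Z0 i) (Xb i) ∈ Ai 0 := by
    intro i
    have h1' : br (Z0 i) (X0 i) ∈ Ai 0 := by
      have := hbr (k i) (-(k i)) _ _ (hkmem i) (hX0mem i)
      rwa [show (k i + -(k i)) = 0 by ring] at this
    have h2' : ∀ l, br (Z0 i) (Z0 l) ∈ Ai 0 := by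
      intro l
      have := hbr (k i) 1 _ _ (hkmem i) (hZ0mem l)
      exact hmono 0 (k i + 1) (by have := hk1 i; omega) this
    rw [hXb]
    simp only [map_sub, map_smul, map_sum]
    exact Submodule.sub_mem _ h1'
      (Submodule.smul_mem _ _ (Submodule.sum_mem _ fun l _ => Submodule.smul_mem _ _ (h2' l)))
  -- the A-part
  have hs10 : Submodule.span ℝ s ≤ Ai 0 := by
    rw [hspan1]
    have := hdec 0
    rwa [zero_add] at this
  obtain ⟨t, hst, ht0, htLI, htspan⟩ := extend_span (Ai 0) s hsLI hs10
  have htfin : t.Finite := htLI.setFinite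
  set u : Set A := t \ s with hu
  have hufin : u.Finite := htfin.subset Set.diff_subset
  letI := hufin.fintype
  set m : ℕ := Fintype.card u with hm
  set eu : u ≃ Fin m := Fintype.equivFin u with heu
  set A0 : Fin m → A := fun r => ((eu.symm r : u) : A) with hA0
  have hA0range : Set.range A0 = u := by
    have : A0 = Subtype.val ∘ eu.symm := rfl
    rw [this, Set.range_comp, Equiv.range_eq_univ, Set.image_univ, Subtype.range_coe]
  have hA0memt : ∀ r, A0 r ∈ t := fun r => (eu.symm r).2.1
  have hA0mem : ∀ r, A0 r ∈ Ai 0 := fun r => ht0 (hA0memt r)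
  set Ab : Fin m → A := fun r => A0 r - ∑ i, (B (A0 r) (Xb i)) • Z0 i with hAb
  have hB01 : ∀ a ∈ Ai 0, ∀ z ∈ Ai 1, B a z = 0 := fun a ha z hz => (h1 ▸ hz) a ha
  have hB10 : ∀ z ∈ Ai 1, ∀ a ∈ Ai 0, B z a = 0 := fun z hz a ha => by
    rw [hsymm]; exact hB01 a ha z hz
  have hAbmem : ∀ r, Ab r ∈ Ai 0 := by
    intro r
    rw [hAb]
    exact Submodule.sub_mem _ (hA0mem r)
      (Submodule.sum_mem _ fun l _ =>
        Submodule.smul_mem _ _ (hmono 0 1 zero_le_one (hZ0mem l)))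
  have hBAbX : ∀ r i, B (Ab r) (Xb i) = 0 := by
    intro r i
    rw [hAb]
    simp only [map_sub, map_smul, map_sum, LinearMap.sub_apply, LinearMap.smul_apply,
      LinearMap.sum_apply, LinearMap.coe_smul, Pi.smul_apply, smul_eq_mul]
    have : ∀ l : Fin n, B (A0 r) (Xb l) * B (Z0 l) (Xb i) =
        B (A0 r) (Xb l) * (if i = l then 1 else 0) := by
      intro l
      rw [hBZX l i]
      simp [eq_comm]
    rw [Finset.sum_congr rfl (fun l _ => this l)]
    simp only [mul_ite, mul_one, mul_zero]
    simp
  have hBAbZ : ∀ r j, B (Ab r) (Z0 j) = 0 := fun r j =>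
    hB01 _ (hAbmem r) _ (hZ0mem j)
  have hBZAb : ∀ j r, B (Z0 j) (Ab r) = 0 := fun j r =>
    hB10 _ (hZ0mem j) _ (hAbmem r)
  -- linear independence of the combined (A0, Z0) family
  have hZ0memt : ∀ i, Z0 i ∈ t := fun i => hst (e.symm i).2
  have hA0inj : Function.Injective A0 :=
    Subtype.val_injective.comp (Equiv.injective eu.symm)
  set σ : (Fin m ⊕ Fin n) → t := Sum.elim (fun r => ⟨A0 r, hA0memt r⟩)
    (fun i => ⟨Z0 i, hZ0memt i⟩) with hσ
  have hσinj : Function.Injective σ := by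
    rintro (r | i) (r' | i') hpq <;> simp only [hσ, Sum.elim_inl, Sum.elim_inr,
      Subtype.mk.injEq] at hpq
    · rw [hA0inj hpq]
    · exfalso
      have h1' : A0 r ∉ s := (eu.symm r).2.2
      have h2' : Z0 i' ∈ s := (e.symm i').2
      rw [hpq] at h1'
      exact h1' h2'
    · exfalso
      have h1' : A0 r' ∉ s := (eu.symm r').2.2
      have h2' : Z0 i ∈ s := (e.symm i).2
      rw [← hpq] at h1'
      exact h1' h2'
    · rw [hZ0LI.injective hpq]
  set G : (Fin m ⊕ Fin n) → A := Sum.elim A0 Z0 with hG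
  have hGσ : G = Subtype.val ∘ σ := by
    funext p
    cases p <;> rfl
  have hGLI : LinearIndependent ℝ G := by
    rw [hGσ]
    exact htLI.comp σ hσinj
  set F : Fin n ⊕ (Fin m ⊕ Fin n) → A := Sum.elim Xb (Sum.elim Ab Z0) with hF
  have hFLI : LinearIndependent ℝ F := by
    rw [Fintype.linearIndependent_iff]
    intro g hg
    rw [Fintype.sum_sum_type, Fintype.sum_sum_type] at hg
    simp only [hF, Sum.elim_inl, Sum.elim_inr] at hg
    have hg1 : ∀ jj, g (Sum.inl jj) = 0 := by
      intro jj
      have hzero := congrArg (fun x => B x (Z0 jj)) hg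
      simp only [map_add, map_sum, map_smul, LinearMap.add_apply, LinearMap.sum_apply,
        LinearMap.smul_apply, smul_eq_mul, map_zero, LinearMap.zero_apply] at hzero
      have c1 : ∑ i : Fin n, g (Sum.inl i) * B (Xb i) (Z0 jj) = g (Sum.inl jj) := by
        rw [Finset.sum_congr rfl (fun i (_ : i ∈ Finset.univ) => by rw [hBXZ i jj])]
        simp [mul_ite]
      have c2 : ∑ r : Fin m, g (Sum.inr (Sum.inl r)) * B (Ab r) (Z0 jj) = 0 :=
        Finset.sum_eq_zero fun r _ => by rw [hBAbZ r jj, mul_zero]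
      have c3 : ∑ i : Fin n, g (Sum.inr (Sum.inr i)) * B (Z0 i) (Z0 jj) = 0 :=
        Finset.sum_eq_zero fun i _ => by rw [hBZ0Z0 i jj, mul_zero]
      rw [c1, c2, c3] at hzero
      simpa using hzero
    have hg3 : ∀ jj, g (Sum.inr (Sum.inr jj)) = 0 := by
      intro jj
      have hzero := congrArg (fun x => B x (Xb jj)) hg
      simp only [map_add, map_sum, map_smul, LinearMap.add_apply, LinearMap.sum_apply,
        LinearMap.smul_apply, smul_eq_mul, map_zero, LinearMap.zero_apply] at hzero
      have c1 : ∑ i : Fin n, g (Sum.inl i) * B (Xb i) (Xb jj) = 0 :=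
        Finset.sum_eq_zero fun i _ => by rw [hBXX i jj, mul_zero]
      have c2 : ∑ r : Fin m, g (Sum.inr (Sum.inl r)) * B (Ab r) (Xb jj) = 0 :=
        Finset.sum_eq_zero fun r _ => by rw [hBAbX r jj, mul_zero]
      have c3 : ∑ i : Fin n, g (Sum.inr (Sum.inr i)) * B (Z0 i) (Xb jj) =
          g (Sum.inr (Sum.inr jj)) := by
        rw [Finset.sum_congr rfl (fun i (_ : i ∈ Finset.univ) => by rw [hBZX i jj])]
        simp [mul_ite]
      rw [c1, c2, c3] at hzero
      simpa using hzero
    set g2 : Fin m → ℝ := fun r => g (Sum.inr (Sum.inl r)) with hg2def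
    have hgA : ∑ r, g2 r • Ab r = 0 := by
      have cX : ∑ i : Fin n, g (Sum.inl i) • Xb i = 0 :=
        Finset.sum_eq_zero fun i _ => by rw [hg1 i, zero_smul]
      have cZ : ∑ i : Fin n, g (Sum.inr (Sum.inr i)) • Z0 i = 0 :=
        Finset.sum_eq_zero fun i _ => by rw [hg3 i, zero_smul]
      rw [cX, cZ] at hg
      rw [zero_add, add_zero] at hg
      exact hg
    have hexpand : ∑ r, g2 r • A0 r
        - ∑ i, (∑ r, g2 r * B (A0 r) (Xb i)) • Z0 i = 0 := by
      have key : ∀ r : Fin m, g2 r • Ab r =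
          g2 r • A0 r - ∑ i, (g2 r * B (A0 r) (Xb i)) • Z0 i := by
        intro r
        rw [hAb, smul_sub, Finset.smul_sum]
        congr 1
        exact Finset.sum_congr rfl fun i _ => smul_smul _ _ _
      calc ∑ r, g2 r • A0 r - ∑ i, (∑ r, g2 r * B (A0 r) (Xb i)) • Z0 i
          = ∑ r, g2 r • A0 r - ∑ i, ∑ r, (g2 r * B (A0 r) (Xb i)) • Z0 i := by
            congr 1
            exact Finset.sum_congr rfl fun i _ => Finset.sum_smul
        _ = ∑ r, g2 r • A0 r - ∑ r, ∑ i, (g2 r * B (A0 r) (Xb i)) • Z0 i := by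
            rw [Finset.sum_comm]
        _ = ∑ r, (g2 r • A0 r - ∑ i, (g2 r * B (A0 r) (Xb i)) • Z0 i) := by
            rw [Finset.sum_sub_distrib]
        _ = ∑ r, g2 r • Ab r := Finset.sum_congr rfl fun r _ => (key r).symm
        _ = 0 := hgA
    have hg2 : ∀ r, g2 r = 0 := by
      have hLIG := Fintype.linearIndependent_iff.1 hGLI
        (Sum.elim g2 (fun i => -(∑ r, g2 r * B (A0 r) (Xb i))))
      intro r
      have hzz : ∑ p, Sum.elim g2 (fun i => -(∑ r, g2 r * B (A0 r) (Xb i))) p • G p = 0 := by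
        rw [Fintype.sum_sum_type]
        simp only [hG, Sum.elim_inl, Sum.elim_inr, neg_smul]
        rw [Finset.sum_neg_distrib, ← sub_eq_add_neg]
        exact hexpand
      exact hLIG hzz (Sum.inl r)
    intro p
    rcases p with i | (r | i)
    · exact hg1 i
    · exact hg2 r
    · exact hg3 i
    -- dimension count and span
  have hGrange : Set.range G = t := by
    rw [hG, Set.Sum.elim_range, hA0range, hZ0range]
    exact Set.diff_union_of_subset hst
  have hrk0 : finrank ℝ (Ai 0) = m + n := by
    rw [← htspan, ← hGrange, finrank_span_eq_card hGLI, Fintype.card_sum,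
      Fintype.card_fin, Fintype.card_fin]
  have hdim : n + (m + n) = d := by omega
  have hFspan : Submodule.span ℝ (Set.range F) = ⊤ := by
    apply Submodule.eq_top_of_finrank_eq
    rw [finrank_span_eq_card hFLI]
    simp only [Fintype.card_sum, Fintype.card_fin]
    exact hdim
  -- B is a bijection onto the dual
  have hBker : LinearMap.ker B = ⊥ := by
    rw [LinearMap.ker_eq_bot']
    intro x hx
    apply hnondeg
    intro y
    rw [hx]
    rfl
  have hBinj : Function.Injective B := LinearMap.ker_eq_bot.mp hBker
  have hBsurj : Function.Surjective B :=
    (LinearMap.injective_iff_surjective_of_finrank_eq_finrank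
      (Subspace.dual_finrank_eq (K := ℝ) (V := A)).symm).1 hBinj
  set bF : Basis (Fin n ⊕ (Fin m ⊕ Fin n)) ℝ A := Basis.mk hFLI (le_of_eq hFspan.symm)
    with hbFdef
  have hbF : ∀ p, bF p = F p := fun p => Basis.mk_apply _ _ _
  have hA' : ∀ r : Fin m, ∃ a : A, ∀ q, B a (F q) =
      if (Sum.inr (Sum.inl r) : Fin n ⊕ (Fin m ⊕ Fin n)) = q then 1 else 0 := by
    intro r
    obtain ⟨a, ha⟩ := hBsurj (bF.coord (Sum.inr (Sum.inl r)))
    refine ⟨a, fun q => ?_⟩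
    have h1' : B a (F q) = bF.coord (Sum.inr (Sum.inl r)) (F q) :=
      LinearMap.congr_fun ha (F q)
    rw [h1', ← hbF q, Basis.coord_apply, Basis.repr_self]
    simp [Finsupp.single_apply, eq_comm]
  choose A'b hA'b using hA'
  have hA'mem : ∀ r, A'b r ∈ Ai 0 := by
    intro r
    rw [h0]
    intro z hz
    have hker : Ai 1 ≤ LinearMap.ker (B.flip (A'b r)) := by
      rw [← hspan1, Submodule.span_le]
      rintro zz hzz
      rw [← hZ0range] at hzz
      obtain ⟨j, rfl⟩ := hzz
      rw [SetLike.mem_coe, LinearMap.mem_ker, LinearMap.flip_apply, hsymm]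
      have hq := hA'b r (Sum.inr (Sum.inr j))
      rw [if_neg (by simp)] at hq
      exact hq
    have hzz := hker hz
    rw [LinearMap.mem_ker, LinearMap.flip_apply] at hzz
    exact hzz
  refine ⟨n, m, Xb, Z0, Ab, A'b, hFLI, hFspan, hZ0mem, hAbmem, hBXX, hBAbX, hBXZ, hbrZX,
    hA'mem, ?_⟩
  intro p q
  rcases p with i | (r | i)
  · rcases q with j | (r' | j)
    · simp only [Sum.elim_inl, Sum.elim_inr, Sum.inl.injEq]
      exact hBZX i j
    · simp only [Sum.elim_inl, Sum.elim_inr]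
      rw [if_neg (by simp)]
      exact hBZAb i r'
    · simp only [Sum.elim_inl, Sum.elim_inr]
      rw [if_neg (by simp)]
      exact hBZ0Z0 i j
  · exact hA'b r q
  · rcases q with j | (r' | j)
    · simp only [Sum.elim_inl, Sum.elim_inr]
      rw [if_neg (by simp)]
      exact hBXX i j
    · simp only [Sum.elim_inl, Sum.elim_inr]
      rw [if_neg (by simp)]
      rw [hsymm]
      exact hBAbX r' i
    · simp only [Sum.elim_inl, Sum.elim_inr, Sum.inr.injEq, Sum.inl.injEq]
      exact hBXZ i j
end
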